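/- Let (H_t)_{t∈[0,1]} be a continuous family of degree-one monotone lifts such that for every x ∈ ℝ the map t ↦ H_t(x) is monotone (nonincreasing for every x, or nondecreasing for every x). Assume that H₀ is strictly increasing and surjective and that its induced circle homeomorphism is minimal, that |τ(H₁) − τ(H₀)| < 1, and that H₁(y₀) ≠ H₀(y₀) for some y₀ ∈ ℝ. Then τ(H₁) ≠ τ(H₀). -/

import Mathlib

open Set Filter

/-- A degree-one monotone lift: a continuous nondecreasing map `H : ℝ → ℝ` with
`H(x+1) = H(x)+1` for all `x`; it induces a continuous degree-one monotone self-map of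
`ℝ/ℤ` (a circle endomorphism), which is an orientation-preserving circle homeomorphism when
`H` is strictly increasing and surjective. -/
def IsDeg1MonotoneLift (H : ℝ → ℝ) : Prop :=
  Continuous H ∧ Monotone H ∧ ∀ x : ℝ, H (x + 1) = H x + 1

/-- `τ` is the translation number of the degree-one monotone lift `H`:
`(Hⁿ(x) − x)/n → τ` for every `x`.  The rotation number of the induced circle map is
`τ` mod 1. -/
def HasTransNum (H : ℝ → ℝ) (τ : ℝ) : Prop :=
  ∀ x : ℝ, Tendsto (fun n : ℕ => (H^[n] x - x) / (n : ℝ)) atTop (nhds τ)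

/-- The circle homeomorphism induced by the lift `H` is minimal: for every `x ∈ ℝ` the full
orbit `{Hⁿ(x) + m : n, m ∈ ℤ}` is dense in `ℝ` (`y` belongs to this set iff `Hⁿ(x) + m = y`
for some `n ∈ ℕ, m ∈ ℤ`, or `Hⁿ(y) + m = x` for some `n ∈ ℕ, m ∈ ℤ`). -/
def IsMinimalLift (H : ℝ → ℝ) : Prop :=
  ∀ x : ℝ, Dense {y : ℝ | ∃ n : ℕ, ∃ m : ℤ, H^[n] x + (m : ℝ) = y ∨ H^[n] y + (m : ℝ) = x}

namespace TNAux

open CircleDeg1Lift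

/-- integer zpow iterates of a unit lift -/
noncomputable def Ak (fu : CircleDeg1Liftˣ) (k : ℤ) : CircleDeg1Lift :=
  ((fu ^ k : CircleDeg1Liftˣ) : CircleDeg1Lift)

lemma Ak_add (fu : CircleDeg1Liftˣ) (k l : ℤ) (x : ℝ) :
    Ak fu (k + l) x = Ak fu k (Ak fu l x) := by
  simp only [Ak, zpow_add, Units.val_mul, mul_apply]

lemma Ak_zero (fu : CircleDeg1Liftˣ) (x : ℝ) : Ak fu 0 x = x := by
  simp [Ak]

lemma Ak_cancel (fu : CircleDeg1Liftˣ) (k : ℤ) (x : ℝ) :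
    Ak fu k (Ak fu (-k) x) = x := by
  rw [← Ak_add]; simp [Ak_zero]

lemma Ak_inj (fu : CircleDeg1Liftˣ) (k : ℤ) : Function.Injective (Ak fu k) := by
  intro a b h
  have ha : Ak fu (-k) (Ak fu k a) = a := by rw [← Ak_add]; simp [Ak_zero]
  have hb : Ak fu (-k) (Ak fu k b) = b := by rw [← Ak_add]; simp [Ak_zero]
  rw [← ha, ← hb, h]

lemma Ak_nat (fu : CircleDeg1Liftˣ) (p : ℕ) (x : ℝ) :
    Ak fu (p : ℤ) x = (⇑(fu : CircleDeg1Lift))^[p] x := by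
  rw [Ak, zpow_natCast]
  rw [show ((fu ^ p : CircleDeg1Liftˣ) : CircleDeg1Lift) = ((fu : CircleDeg1Lift) ^ p) from Units.val_pow_eq_pow_val fu p ▸ rfl]
  rw [coe_pow]

lemma Ak_tau (fu : CircleDeg1Liftˣ) (k : ℤ) :
    (Ak fu k).translationNumber = (k : ℝ) * (fu : CircleDeg1Lift).translationNumber := by
  rw [Ak, translationNumber_zpow]

lemma Ak_one (fu : CircleDeg1Liftˣ) (x : ℝ) : Ak fu 1 x = (fu : CircleDeg1Lift) x := by
  simp [Ak]

lemma commute_translate (f : CircleDeg1Lift) (m : ℤ) :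
    Commute ↑(translate (Multiplicative.ofAdd (m : ℝ))) f := by
  apply CircleDeg1Lift.ext
  intro x
  simp only [mul_apply]
  rw [translate_apply, translate_apply, f.map_int_add]

lemma tau_psi (fu : CircleDeg1Liftˣ) (k m : ℤ) :
    (↑(translate (Multiplicative.ofAdd (m : ℝ))) * Ak fu k).translationNumber
      = (m : ℝ) + (k : ℝ) * (fu : CircleDeg1Lift).translationNumber := by
  rw [translationNumber_mul_of_commute (commute_translate (Ak fu k) m),
    translationNumber_translate, Ak_tau]

lemma closed_int_orbit (c : ℝ) : IsClosed {y : ℝ | ∃ t : ℤ, y = c + t} := by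
  have h : {y : ℝ | ∃ t : ℤ, y = c + t} = (fun y => y - c) ⁻¹' (Set.range ((↑) : ℤ → ℝ)) := by
    ext y
    constructor
    · rintro ⟨t, rfl⟩; exact ⟨t, by simp⟩
    · rintro ⟨t, ht⟩
      simp only [mem_preimage] at ht
      exact ⟨t, by
        have : (t : ℝ) = y - c := ht
        linarith⟩
  rw [h]
  exact Int.isClosedEmbedding_coe_real.isClosed_range.preimage (continuous_id.sub continuous_const)

lemma noPer_pos (fu : CircleDeg1Liftˣ) (hc : Continuous (fu : CircleDeg1Lift))
    (hmin : IsMinimalLift ⇑(fu : CircleDeg1Lift)) :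
    ∀ k m : ℤ, 0 < k → (k : ℝ) * (fu : CircleDeg1Lift).translationNumber + m ≠ 0 := by
  intro k m hk hkm
  set F : CircleDeg1Lift := (fu : CircleDeg1Lift) with hF
  set n : ℕ := k.toNat with hn
  have hn0 : 0 < n := by omega
  have hkn : (n : ℝ) = (k : ℝ) := by
    have : ((n : ℤ) : ℝ) = (k : ℝ) := by norm_cast; omega
    simpa using this
  have hρ : F.translationNumber = ((-m : ℤ) : ℝ) / (n : ℕ) := by
    push_cast
    rw [eq_div_iff (by positivity), hkn]
    push_cast at hkm ⊢
    linarith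
  rw [translationNumber_eq_rat_iff F hc hn0] at hρ
  obtain ⟨x₀, hx₀⟩ := hρ
  set M : ℤ := -m with hM
  have hAx : Ak fu (n : ℤ) x₀ = x₀ + (M : ℝ) := by
    rw [Ak_nat, ← coe_pow]; exact hx₀
  have hAxneg : Ak fu (-(n : ℤ)) x₀ = x₀ - (M : ℝ) := by
    apply Ak_inj fu (n : ℤ)
    rw [Ak_cancel]
    have : (x₀ - (M : ℝ)) = (x₀ + ((-M : ℤ) : ℝ)) := by push_cast; ring
    rw [this, (Ak fu (n:ℤ)).map_add_int, hAx]
    push_cast; ring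
  have hq : ∀ q : ℤ, Ak fu ((n : ℤ) * q) x₀ = x₀ + ((q * M : ℤ) : ℝ) := by
    intro q
    induction q using Int.induction_on with
    | zero => simp [Ak_zero]
    | succ p ih =>
        have h1 : ((n : ℤ) * ((p : ℤ) + 1)) = (n : ℤ) + (n : ℤ) * p := by ring
        rw [h1, Ak_add, ih, (Ak fu (n : ℤ)).map_add_int, hAx]
        push_cast; ring
    | pred p ih =>
        have h1 : ((n : ℤ) * (-(p : ℤ) - 1)) = -(n : ℤ) + (n : ℤ) * (-(p : ℤ)) := by ring
        rw [h1, Ak_add, ih, (Ak fu (-(n : ℤ))).map_add_int, hAxneg]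
        push_cast; ring
  -- every point of the full orbit of x₀ lies in a finite union of integer translates
  have hdecomp : ∀ j : ℤ, ∃ (r : ℕ) (t : ℤ), r < n ∧
      Ak fu j x₀ = (⇑F)^[r] x₀ + (t : ℝ) := by
    intro j
    set q : ℤ := j / (n : ℤ) with hq'
    set r : ℤ := j % (n : ℤ) with hr'
    have hrn : 0 ≤ r := Int.emod_nonneg j (by omega)
    have hrlt : r < (n : ℤ) := Int.emod_lt_of_pos j (by omega)
    refine ⟨r.toNat, q * M, by omega, ?_⟩
    have hj : j = r + (n : ℤ) * q := by
      rw [hr', hq']; exact (Int.emod_add_mul_ediv j (n:ℤ)).symm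
    have hAr : Ak fu r x₀ = (⇑F)^[r.toNat] x₀ := by
      have h2 := Ak_nat fu r.toNat x₀
      rw [show ((r.toNat : ℕ) : ℤ) = r by omega] at h2
      exact h2
    rw [hj, Ak_add, hq, (Ak fu r).map_add_int, hAr]
  -- the orbit set from minimality is contained in C
  set C : Set ℝ := ⋃ r ∈ Finset.range n, {y : ℝ | ∃ t : ℤ, y = (⇑F)^[r] x₀ + t} with hC
  have hCclosed : IsClosed C := by
    apply Set.Finite.isClosed_biUnion (Finset.range n).finite_toSet
    intro r _
    exact closed_int_orbit _
  have hCcount : C.Countable := by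
    apply Set.Countable.biUnion (Finset.range n).countable_toSet
    intro r _
    have : {y : ℝ | ∃ t : ℤ, y = (⇑F)^[r] x₀ + t} = Set.range (fun t : ℤ => (⇑F)^[r] x₀ + (t:ℝ)) := by
      ext y; constructor
      · rintro ⟨t, rfl⟩; exact ⟨t, rfl⟩
      · rintro ⟨t, rfl⟩; exact ⟨t, rfl⟩
    rw [this]; exact Set.countable_range _
  have hsub : {y : ℝ | ∃ p : ℕ, ∃ t : ℤ, (⇑F)^[p] x₀ + (t : ℝ) = y ∨ (⇑F)^[p] y + (t : ℝ) = x₀} ⊆ C := by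
    rintro y ⟨p, t, hcase | hcase⟩
    · obtain ⟨r, t', hrn, hAr⟩ := hdecomp (p : ℤ)
      rw [Ak_nat] at hAr
      refine Set.mem_biUnion (Finset.mem_range.2 hrn) ⟨t' + t, ?_⟩
      rw [← hcase, hAr]
      push_cast; ring
    · -- y = Ak (-p) (x₀ - t)
      have hy : Ak fu (-(p : ℤ)) x₀ - (t : ℝ) = y := by
        apply Ak_inj fu (p : ℤ)
        have : Ak fu (-(p:ℤ)) x₀ - (t:ℝ) = Ak fu (-(p:ℤ)) x₀ + ((-t : ℤ) : ℝ) := by push_cast; ring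
        rw [this, (Ak fu ((p:ℤ))).map_add_int, Ak_cancel, Ak_nat]
        rw [show (⇑(fu : CircleDeg1Lift)) = ⇑F from rfl]
        rw [show (⇑F)^[p] y = x₀ - (t:ℝ) by linarith [hcase]]
        push_cast; ring
      obtain ⟨r, t', hrn, hAr⟩ := hdecomp (-(p : ℤ))
      refine Set.mem_biUnion (Finset.mem_range.2 hrn) ⟨t' - t, ?_⟩
      rw [← hy, hAr]
      push_cast; ring
  have hdense := hmin x₀
  have huniv : (Set.univ : Set ℝ) ⊆ C := by
    rw [← hdense.closure_eq]
    exact hCclosed.closure_subset_iff.2 hsub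
  exact Cardinal.not_countable_real (hCcount.mono (Set.univ_subset_iff.1 huniv ▸ Set.Subset.rfl))

lemma noPer (fu : CircleDeg1Liftˣ) (hc : Continuous (fu : CircleDeg1Lift))
    (hmin : IsMinimalLift ⇑(fu : CircleDeg1Lift)) :
    ∀ k m : ℤ, k ≠ 0 → (k : ℝ) * (fu : CircleDeg1Lift).translationNumber + m ≠ 0 := by
  intro k m hk hkm
  rcases lt_or_gt_of_ne hk with hneg | hpos
  · exact noPer_pos fu hc hmin (-k) (-m) (by omega) (by push_cast; linarith)
  · exact noPer_pos fu hc hmin k m hpos hkm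

section Ord
variable (fu : CircleDeg1Liftˣ) (hc : Continuous (fu : CircleDeg1Lift))
  (hmin : IsMinimalLift ⇑(fu : CircleDeg1Lift))
include hc hmin

lemma ord_lt (k m : ℤ) :
    (0 < Ak fu k 0 + m) ↔ (0 < (k : ℝ) * (fu : CircleDeg1Lift).translationNumber + m) := by
  rcases eq_or_ne k 0 with rfl | hk
  · simp [Ak_zero]
  · set Ψ : CircleDeg1Lift := ↑(translate (Multiplicative.ofAdd (m : ℝ))) * Ak fu k with hΨ
    have hΨ0 : Ψ 0 = (m : ℝ) + Ak fu k 0 := by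
      rw [hΨ, mul_apply, translate_apply]
    have hτΨ : Ψ.translationNumber = (m : ℝ) + (k : ℝ) * (fu : CircleDeg1Lift).translationNumber :=
      tau_psi fu k m
    have hτne : Ψ.translationNumber ≠ 0 := by
      rw [hτΨ]
      intro h
      exact noPer fu hc hmin k m hk (by linarith)
    constructor
    · intro h
      have h0 : (0:ℝ) + ((0:ℤ):ℝ) ≤ Ψ 0 := by rw [hΨ0]; push_cast; linarith
      have := Ψ.le_translationNumber_of_add_int_le h0
      have h1 : 0 ≤ Ψ.translationNumber := by exact_mod_cast this
      rw [hτΨ] at h1 hτne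
      rcases lt_or_eq_of_le h1 with h2 | h2
      · linarith
      · exact absurd h2.symm hτne
    · intro h
      by_contra hle
      push_neg at hle
      have h0 : Ψ 0 ≤ 0 + ((0:ℤ):ℝ) := by rw [hΨ0]; push_cast; linarith
      have := Ψ.translationNumber_le_of_le_add_int h0
      rw [hτΨ] at this
      have : ((0:ℤ):ℝ) = 0 := by norm_cast
      linarith [Ψ.translationNumber_le_of_le_add_int h0, hτΨ ▸ (by exact_mod_cast Ψ.translationNumber_le_of_le_add_int h0 : Ψ.translationNumber ≤ (0:ℝ))]

lemma ord_le (k m : ℤ) :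
    (Ak fu k 0 + m ≤ 0) ↔ ((k : ℝ) * (fu : CircleDeg1Lift).translationNumber + m ≤ 0) := by
  rw [← not_lt, ← not_lt, ord_lt fu hc hmin]

lemma orb_le (k m k' m' : ℤ) :
    (Ak fu k 0 + m ≤ Ak fu k' 0 + m') ↔
      ((k : ℝ) * (fu : CircleDeg1Lift).translationNumber + m ≤
        (k' : ℝ) * (fu : CircleDeg1Lift).translationNumber + m') := by
  have step : (Ak fu k 0 + m ≤ Ak fu k' 0 + m') ↔ Ak fu (k - k') 0 + ((m - m' : ℤ) : ℝ) ≤ 0 := by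
    constructor
    · intro h
      have h2 := (Ak fu (-k')).mono h
      rw [show (Ak fu k 0 + (m:ℝ)) = Ak fu k 0 + ((m:ℤ):ℝ) from rfl,
        show (Ak fu k' 0 + (m':ℝ)) = Ak fu k' 0 + ((m':ℤ):ℝ) from rfl] at h2
      rw [(Ak fu (-k')).map_add_int, (Ak fu (-k')).map_add_int, ← Ak_add, ← Ak_add] at h2
      rw [show (-k' + k) = k - k' by ring, show (-k' + k') = 0 by ring, Ak_zero] at h2
      push_cast at h2 ⊢
      linarith
    · intro h
      have h1 : Ak fu (k - k') 0 ≤ ((m' - m : ℤ) : ℝ) := by push_cast at h ⊢; linarith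
      have h2 := (Ak fu k').mono h1
      rw [← Ak_add, show (k' + (k - k')) = k by ring] at h2
      rw [show ((m' - m : ℤ) : ℝ) = 0 + ((m' - m : ℤ) : ℝ) by ring,
        (Ak fu k').map_add_int] at h2
      push_cast at h2 ⊢
      linarith
  rw [step, ord_le fu hc hmin]
  push_cast
  constructor <;> intro <;> linarith

lemma orb_lt (k m k' m' : ℤ) :
    (Ak fu k 0 + m < Ak fu k' 0 + m') ↔
      ((k : ℝ) * (fu : CircleDeg1Lift).translationNumber + m <
        (k' : ℝ) * (fu : CircleDeg1Lift).translationNumber + m') := by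
  rw [← not_le, ← not_le, orb_le fu hc hmin]

lemma denseV :
    Dense {v : ℝ | ∃ k m : ℤ, v = (k : ℝ) * (fu : CircleDeg1Lift).translationNumber + m} := by
  set ρ := (fu : CircleDeg1Lift).translationNumber with hρdef
  set S : AddSubgroup ℝ :=
    { carrier := {v : ℝ | ∃ k m : ℤ, v = (k : ℝ) * ρ + m}
      zero_mem' := ⟨0, 0, by push_cast; ring⟩
      add_mem' := by
        rintro a b ⟨k, m, rfl⟩ ⟨k', m', rfl⟩
        exact ⟨k + k', m + m', by push_cast; ring⟩
      neg_mem' := by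
        rintro a ⟨k, m, rfl⟩
        exact ⟨-k, -m, by push_cast; ring⟩ } with hS
  rcases S.dense_or_cyclic with hd | ⟨a, ha⟩
  · exact hd
  · exfalso
    have h1 : (1 : ℝ) ∈ S := ⟨0, 1, by push_cast; ring⟩
    have hρm : ρ ∈ S := ⟨1, 0, by push_cast; ring⟩
    rw [ha, AddSubgroup.mem_closure_singleton] at h1 hρm
    obtain ⟨n1, hn1⟩ := h1
    obtain ⟨n2, hn2⟩ := hρm
    have hn1' : (n1 : ℝ) * a = 1 := by rw [← hn1]; simp [zsmul_eq_mul]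
    have hn2' : (n2 : ℝ) * a = ρ := by rw [← hn2]; simp [zsmul_eq_mul]
    have hne : n1 ≠ 0 := by rintro rfl; simp at hn1'
    apply noPer fu hc hmin n1 (-n2) hne
    push_cast
    linear_combination (n2 : ℝ) * hn1' - (n1 : ℝ) * hn2'

end Ord

section Hfun

variable (fu : CircleDeg1Liftˣ)

/-- the set whose sup defines the Poincaré linearization -/
def ASet (x : ℝ) : Set ℝ :=
  {v : ℝ | ∃ k m : ℤ, Ak fu k 0 + m ≤ x ∧
    v = (k : ℝ) * (fu : CircleDeg1Lift).translationNumber + m}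

noncomputable def hfun (x : ℝ) : ℝ := sSup (ASet fu x)

lemma ASet_nonempty (x : ℝ) : (ASet fu x).Nonempty := by
  refine ⟨((0 : ℤ) : ℝ) * (fu : CircleDeg1Lift).translationNumber + ((⌊x⌋ : ℤ) : ℝ), 0, ⌊x⌋, ?_, rfl⟩
  rw [Ak_zero]
  simpa using Int.floor_le x

lemma ASet_ub (x : ℝ) : ∀ v ∈ ASet fu x, v ≤ x + 1 := by
  rintro v ⟨k, m, hle, rfl⟩
  have hd := (Ak fu k).dist_map_zero_translationNumber_le
  rw [Ak_tau, Real.dist_eq] at hd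
  have := abs_le.1 hd
  linarith [this.1, this.2]

lemma ASet_bddAbove (x : ℝ) : BddAbove (ASet fu x) := ⟨x + 1, ASet_ub fu x⟩

lemma hfun_mono : Monotone (hfun fu) := by
  intro x y hxy
  apply csSup_le_csSup (ASet_bddAbove fu y) (ASet_nonempty fu x)
  rintro v ⟨k, m, hle, rfl⟩
  exact ⟨k, m, hle.trans hxy, rfl⟩

lemma hfun_le (x : ℝ) : hfun fu x ≤ x + 1 :=
  csSup_le (ASet_nonempty fu x) (ASet_ub fu x)

lemma hfun_ge (x : ℝ) : x - 1 ≤ hfun fu x := by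
  have h1 : ((⌊x⌋ : ℤ) : ℝ) ≤ hfun fu x := by
    have hm : ((0 : ℤ) : ℝ) * (fu : CircleDeg1Lift).translationNumber + ((⌊x⌋ : ℤ) : ℝ) ∈ ASet fu x := by
      refine ⟨0, ⌊x⌋, ?_, rfl⟩
      rw [Ak_zero]; simpa using Int.floor_le x
    have := le_csSup (ASet_bddAbove fu x) hm
    simpa [hfun] using this
  have := Int.sub_one_lt_floor x
  linarith

variable (hc : Continuous (fu : CircleDeg1Lift)) (hmin : IsMinimalLift ⇑(fu : CircleDeg1Lift))
include hc hmin

lemma hfun_val (k m : ℤ) :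
    hfun fu (Ak fu k 0 + m) = (k : ℝ) * (fu : CircleDeg1Lift).translationNumber + m := by
  apply le_antisymm
  · apply csSup_le (ASet_nonempty fu _)
    rintro v ⟨k', m', hle, rfl⟩
    exact (orb_le fu hc hmin k' m' k m).1 hle
  · exact le_csSup (ASet_bddAbove fu _) ⟨k, m, le_rfl, rfl⟩

lemma hfun_semiconj (x : ℝ) :
    hfun fu ((fu : CircleDeg1Lift) x) = hfun fu x + (fu : CircleDeg1Lift).translationNumber := by
  set ρ := (fu : CircleDeg1Lift).translationNumber with hρdef
  have hset : ASet fu ((fu : CircleDeg1Lift) x) = (· + ρ) '' ASet fu x := by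
    ext v
    constructor
    · rintro ⟨k, m, hle, rfl⟩
      refine ⟨((k - 1 : ℤ) : ℝ) * ρ + m, ⟨k - 1, m, ?_, rfl⟩, by push_cast; ring⟩
      have h2 := (Ak fu (-1)).mono hle
      rw [show (Ak fu k 0 + (m : ℝ)) = Ak fu k 0 + ((m : ℤ) : ℝ) from rfl] at h2
      rw [(Ak fu (-1)).map_add_int, ← Ak_add] at h2
      rw [show ((-1) + k) = k - 1 by ring] at h2
      have h3 : Ak fu (-1) ((fu : CircleDeg1Lift) x) = x := by
        have := Ak_cancel fu (1 : ℤ) x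
        rw [Ak_one] at this
        calc Ak fu (-1) ((fu : CircleDeg1Lift) x) = Ak fu (-1) (Ak fu 1 x) := by rw [Ak_one]
        _ = x := by rw [← Ak_add]; simp [Ak_zero]
      rw [h3] at h2
      exact h2
    · rintro ⟨w, ⟨k, m, hle, rfl⟩, rfl⟩
      refine ⟨k + 1, m, ?_, by push_cast; ring⟩
      have h2 := (fu : CircleDeg1Lift).mono hle
      rw [show (Ak fu k 0 + (m : ℝ)) = Ak fu k 0 + ((m : ℤ) : ℝ) from rfl] at h2
      rw [(fu : CircleDeg1Lift).map_add_int] at h2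
      have h3 : (fu : CircleDeg1Lift) (Ak fu k 0) = Ak fu (k + 1) 0 := by
        rw [show (k + 1) = 1 + k by ring, Ak_add, Ak_one]
      rw [h3] at h2
      exact h2
  have hmapsup : (sSup (ASet fu x)) + ρ = sSup ((· + ρ) '' ASet fu x) := by
    have := Monotone.map_csSup_of_continuousAt
      (f := (· + ρ)) (A := ASet fu x)
      ((continuous_id.add continuous_const).continuousAt)
      (fun a b hab => by simpa using add_le_add_right hab ρ)
      (ASet_nonempty fu x) (ASet_bddAbove fu x)
    simpa using this
  rw [hfun, hfun, hset, ← hmapsup]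

lemma hfun_add_one (x : ℝ) : hfun fu (x + 1) = hfun fu x + 1 := by
  have hset : ASet fu (x + 1) = (· + 1) '' ASet fu x := by
    ext v
    constructor
    · rintro ⟨k, m, hle, rfl⟩
      refine ⟨(k : ℝ) * (fu : CircleDeg1Lift).translationNumber + ((m - 1 : ℤ) : ℝ),
        ⟨k, m - 1, ?_, rfl⟩, by push_cast; ring⟩
      push_cast
      push_cast at hle
      linarith
    · rintro ⟨w, ⟨k, m, hle, rfl⟩, rfl⟩
      refine ⟨k, m + 1, by push_cast; push_cast at hle; linarith, by push_cast; ring⟩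
  have hmapsup : (sSup (ASet fu x)) + 1 = sSup ((· + 1) '' ASet fu x) := by
    have := Monotone.map_csSup_of_continuousAt
      (f := (· + (1:ℝ))) (A := ASet fu x)
      ((continuous_id.add continuous_const).continuousAt)
      (fun a b hab => by simpa using add_le_add_right hab 1)
      (ASet_nonempty fu x) (ASet_bddAbove fu x)
    simpa using this
  rw [hfun, hfun, hset, ← hmapsup]

omit hc hmin in
lemma orbit_form (x : ℝ) :
    {y : ℝ | ∃ p : ℕ, ∃ t : ℤ, (⇑(fu : CircleDeg1Lift))^[p] x + (t : ℝ) = y ∨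
      (⇑(fu : CircleDeg1Lift))^[p] y + (t : ℝ) = x} ⊆
    {y : ℝ | ∃ k t : ℤ, y = Ak fu k x + t} := by
  rintro y ⟨p, t, hcase | hcase⟩
  · exact ⟨p, t, by rw [← hcase, Ak_nat]⟩
  · refine ⟨-(p : ℤ), -t, ?_⟩
    apply Ak_inj fu (p : ℤ)
    rw [show (Ak fu (-(p:ℤ)) x + ((-t : ℤ) : ℝ)) = Ak fu (-(p:ℤ)) x + ((-t : ℤ) : ℝ) from rfl]
    rw [(Ak fu ((p:ℤ))).map_add_int, Ak_cancel, Ak_nat]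
    push_cast
    linarith [hcase]

lemma hfun_strictMono : StrictMono (hfun fu) := by
  intro x y hxy
  have hdense := hmin 0
  obtain ⟨d₁, hd₁S, hd₁⟩ := hdense.exists_between hxy
  obtain ⟨d₂, hd₂S, hd₂⟩ := hdense.exists_between hd₁.2
  obtain ⟨k₁, m₁, hd₁'⟩ := orbit_form fu 0 hd₁S
  obtain ⟨k₂, m₂, hd₂'⟩ := orbit_form fu 0 hd₂S
  calc hfun fu x ≤ hfun fu d₁ := hfun_mono fu hd₁.1.le
    _ < hfun fu d₂ := by
        rw [hd₁', hd₂', hfun_val fu hc hmin, hfun_val fu hc hmin]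
        exact (orb_lt fu hc hmin k₁ m₁ k₂ m₂).1 (by rw [← hd₁', ← hd₂']; exact hd₂.1)
    _ ≤ hfun fu y := hfun_mono fu hd₂.2.le

lemma hfun_continuous : Continuous (hfun fu) := by
  apply (hfun_mono fu).continuous_of_denseRange
  apply (denseV fu hc hmin).mono
  rintro v ⟨k, m, rfl⟩
  exact ⟨Ak fu k 0 + m, hfun_val fu hc hmin k m⟩

lemma hfun_surjective : Function.Surjective (hfun fu) := by
  intro y
  have h1 : hfun fu (y - 1) ≤ y := by linarith [hfun_le fu (y - 1)]
  have h2 : y ≤ hfun fu (y + 1) := by linarith [hfun_ge fu (y + 1)]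
  have := intermediate_value_Icc (by linarith : y - 1 ≤ y + 1)
    ((hfun_continuous fu hc hmin).continuousOn)
  obtain ⟨x, _, hx⟩ := this ⟨h1, h2⟩
  exact ⟨x, hx⟩

end Hfun

lemma aux_net {ρ L : ℝ} (hd : Dense {v : ℝ | ∃ k m : ℤ, v = (k : ℝ) * ρ + m}) (hL : 0 < L) :
    ∃ K : ℕ, ∀ a c : ℝ, ∃ j m : ℤ, j.natAbs ≤ K ∧
      a < c + ((j : ℝ) * ρ + m) ∧ c + ((j : ℝ) * ρ + m) < a + L := by
  have hcov : Icc (0:ℝ) 1 ⊆ ⋃ p : ℤ × ℤ, Ioo (((p.1 : ℝ) * ρ + p.2) - L) ((p.1 : ℝ) * ρ + p.2) := by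
    intro y _
    obtain ⟨v, hvV, hv⟩ := hd.exists_between (show y < y + L by linarith)
    obtain ⟨k, m, rfl⟩ := hvV
    exact Set.mem_iUnion.2 ⟨(k, m), ⟨by simp only; linarith [hv.2], hv.1⟩⟩
  obtain ⟨t, ht⟩ := IsCompact.elim_finite_subcover (isCompact_Icc (a := (0:ℝ)) (b := 1))
    (fun p : ℤ × ℤ => Ioo (((p.1 : ℝ) * ρ + p.2) - L) ((p.1 : ℝ) * ρ + p.2))
    (fun p => isOpen_Ioo) hcov
  refine ⟨t.sup (fun p => p.1.natAbs), ?_⟩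
  intro a c
  set w := a - c with hw
  have hy : Int.fract w ∈ Icc (0:ℝ) 1 := ⟨Int.fract_nonneg w, (Int.fract_lt_one w).le⟩
  obtain ⟨p, hpt, hp⟩ := Set.mem_iUnion₂.1 (ht hy)
  have hfr : Int.fract w = w - ⌊w⌋ := rfl
  refine ⟨p.1, p.2 + ⌊w⌋, Finset.le_sup (f := fun p : ℤ × ℤ => p.1.natAbs) hpt, ?_, ?_⟩
  · have h1 := hp.2
    rw [hfr] at h1
    push_cast
    linarith
  · have h2 := hp.1
    rw [hfr] at h2
    push_cast
    linarith

open CircleDeg1Lift in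
lemma aux_rigid (G : CircleDeg1Lift) (hGc : Continuous G) (ρ : ℝ)
    (hτ : G.translationNumber = ρ)
    (hcmp : (∀ z, z + ρ ≤ G z) ∨ (∀ z, G z ≤ z + ρ))
    (hd : Dense {v : ℝ | ∃ k m : ℤ, v = (k : ℝ) * ρ + m}) :
    ∀ z, G z = z + ρ := by
  set E := {z : ℝ | G z = z + ρ} with hE
  have hEc : IsClosed E := isClosed_eq hGc (continuous_id.add continuous_const)
  have hEint : ∀ z ∈ E, ∀ m : ℤ, z + (m : ℝ) ∈ E := by
    intro z hz m
    have hmap : G (z + (m : ℝ)) = G z + (m : ℝ) := G.map_add_int z m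
    simp only [hE, mem_setOf_eq] at hz ⊢
    rw [hmap, hz]; ring
  have hEdense : Dense E := by
    rw [dense_iff_exists_between]
    intro a b hab
    obtain ⟨K, hK⟩ := aux_net hd (sub_pos.2 hab)
    set n : ℕ := 2 * K + 1 with hn
    obtain ⟨x, hx⟩ := (G ^ n).exists_eq_add_translationNumber (G.continuous_pow hGc n)
    rw [translationNumber_pow, hτ] at hx
    rw [coe_pow] at hx
    have key : ∀ k : ℕ, k + 1 ≤ n → (⇑G)^[k] x = x + (k : ℝ) * ρ ∧ x + (k : ℝ) * ρ ∈ E := by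
      have hs0 : (⇑G)^[0] x - x - ((0:ℕ) : ℝ) * ρ = 0 := by simp
      have hsn : (⇑G)^[n] x - x - ((n:ℕ) : ℝ) * ρ = 0 := by rw [hx]; ring
      rcases hcmp with hcmp | hcmp
      · have hmono : Monotone (fun k : ℕ => (⇑G)^[k] x - x - (k : ℝ) * ρ) := by
          apply monotone_nat_of_le_succ
          intro k
          rw [Function.iterate_succ_apply']
          have := hcmp ((⇑G)^[k] x)
          push_cast
          linarith
        have hzero : ∀ k : ℕ, k ≤ n → (⇑G)^[k] x - x - (k : ℝ) * ρ = 0 := by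
          intro k hk
          have h1 := hmono (Nat.zero_le k)
          have h2 := hmono hk
          simp only at h1 h2
          push_cast at h1 h2 ⊢
          push_cast at hs0 hsn
          linarith
        intro k hk
        have e1 := hzero k (by omega)
        have e2 := hzero (k+1) hk
        have hit : (⇑G)^[k] x = x + (k : ℝ) * ρ := by linarith
        refine ⟨hit, ?_⟩
        have hsucc : G ((⇑G)^[k] x) = (⇑G)^[k+1] x := (Function.iterate_succ_apply' (⇑G) k x).symm
        simp only [hE, mem_setOf_eq]
        rw [← hit, hsucc]
        push_cast at e2 ⊢
        linarith
      · have hmono : Antitone (fun k : ℕ => (⇑G)^[k] x - x - (k : ℝ) * ρ) := by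
          apply antitone_nat_of_succ_le
          intro k
          rw [Function.iterate_succ_apply']
          have := hcmp ((⇑G)^[k] x)
          push_cast
          linarith
        have hzero : ∀ k : ℕ, k ≤ n → (⇑G)^[k] x - x - (k : ℝ) * ρ = 0 := by
          intro k hk
          have h1 := hmono (Nat.zero_le k)
          have h2 := hmono hk
          simp only at h1 h2
          push_cast at h1 h2 ⊢
          push_cast at hs0 hsn
          linarith
        intro k hk
        have e1 := hzero k (by omega)
        have e2 := hzero (k+1) hk
        have hit : (⇑G)^[k] x = x + (k : ℝ) * ρ := by linarith
        refine ⟨hit, ?_⟩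
        have hsucc : G ((⇑G)^[k] x) = (⇑G)^[k+1] x := (Function.iterate_succ_apply' (⇑G) k x).symm
        simp only [hE, mem_setOf_eq]
        rw [← hit, hsucc]
        push_cast at e2 ⊢
        linarith
    obtain ⟨j, m, hj, hls, hgt⟩ := hK a (x + (K : ℝ) * ρ)
    set kz : ℤ := (K : ℤ) + j with hkz
    have hkz0 : 0 ≤ kz := by omega
    have hkz2 : kz ≤ 2 * K := by omega
    set k : ℕ := kz.toNat with hk
    have hkk : k + 1 ≤ n := by omega
    have hkE := (key k hkk).2
    have hmemE := hEint _ hkE m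
    have hcast : ((k : ℕ) : ℝ) = (K : ℝ) + (j : ℝ) := by
      have h5 : ((k : ℕ) : ℤ) = (K : ℤ) + j := by omega
      exact_mod_cast congrArg (fun z : ℤ => (z : ℝ)) h5
    have hpoint : x + ((k : ℕ) : ℝ) * ρ + (m : ℝ) = (x + (K : ℝ) * ρ) + ((j : ℝ) * ρ + m) := by
      rw [hcast]; ring
    refine ⟨x + ((k : ℕ) : ℝ) * ρ + (m : ℝ), hmemE, ?_, ?_⟩
    · rw [hpoint]; exact hls
    · rw [hpoint]; linarith
  intro z
  have huniv : E = Set.univ := by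
    rw [← hEc.closure_eq, hEdense.closure_eq]
  have hz : z ∈ E := huniv ▸ Set.mem_univ z
  exact hz

open CircleDeg1Lift in
lemma key (F G : ℝ → ℝ)
    (hF : IsDeg1MonotoneLift F) (hG : IsDeg1MonotoneLift G)
    (hFs : StrictMono F) (hFsur : Function.Surjective F) (hmin : IsMinimalLift F)
    (ρ : ℝ) (hτF : HasTransNum F ρ) (hτG : HasTransNum G ρ)
    (hcmp : (∀ x, F x ≤ G x) ∨ (∀ x, G x ≤ F x)) :
    ∀ y, G y = F y := by
  obtain ⟨hFc, hFm, hFp⟩ := hF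
  obtain ⟨hGc, hGm, hGp⟩ := hG
  set fl : CircleDeg1Lift := ⟨⟨F, hFm⟩, hFp⟩ with hfl
  set gl : CircleDeg1Lift := ⟨⟨G, hGm⟩, hGp⟩ with hgl
  have hbij : Function.Bijective ⇑fl := ⟨hFs.injective, hFsur⟩
  obtain ⟨fu, hfu⟩ := isUnit_iff_bijective.2 hbij
  have hτfl : fl.translationNumber = ρ := by
    have h1 := fl.tendsto_translationNumber 0
    simp only [coe_pow] at h1
    exact tendsto_nhds_unique h1 (hτF 0)
  have hτgl : gl.translationNumber = ρ := by
    have h1 := gl.tendsto_translationNumber 0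
    simp only [coe_pow] at h1
    exact tendsto_nhds_unique h1 (hτG 0)
  have hcu : Continuous ⇑(fu : CircleDeg1Lift) := by rw [hfu]; exact hFc
  have hminu : IsMinimalLift ⇑(fu : CircleDeg1Lift) := by rw [hfu]; exact hmin
  have hρfu : (fu : CircleDeg1Lift).translationNumber = ρ := by rw [hfu]; exact hτfl
  set hl : CircleDeg1Lift := ⟨⟨hfun fu, hfun_mono fu⟩, hfun_add_one fu hcu hminu⟩ with hhl'
  have hlbij : Function.Bijective ⇑hl :=
    ⟨(hfun_strictMono fu hcu hminu).injective, hfun_surjective fu hcu hminu⟩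
  obtain ⟨hu, hhu⟩ := isUnit_iff_bijective.2 hlbij
  set hinv : ℝ → ℝ := ⇑((hu⁻¹ : CircleDeg1Liftˣ) : CircleDeg1Lift) with hhinv
  set Ghat : CircleDeg1Lift := ↑hu * gl * ↑hu⁻¹ with hGhat
  have hτGhat : Ghat.translationNumber = ρ := by
    rw [hGhat, translationNumber_conj_eq, hτgl]
  have hinv_surj : Function.Surjective hinv := by
    intro y
    exact ⟨(hu : CircleDeg1Lift) y, units_inv_apply_apply hu y⟩
  have hinv_cont : Continuous hinv :=
    (continuous_iff_surjective _).2 hinv_surj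
  have hucont : Continuous ⇑(hu : CircleDeg1Lift) := by
    rw [hhu]; exact hfun_continuous fu hcu hminu
  have hGhatc : Continuous ⇑Ghat := by
    rw [hGhat, coe_mul, coe_mul]
    exact hucont.comp (hGc.comp hinv_cont)
  have happly : ∀ z, Ghat z = hfun fu (G (hinv z)) := by
    intro z
    rw [hGhat, mul_apply, mul_apply, hhu]
    rfl
  have hid : ∀ z, hfun fu (hinv z) = z := by
    intro z
    have h' := units_apply_inv_apply hu z
    rw [hhu] at h'
    exact h'
  have hid2 : ∀ z, hinv (hfun fu z) = z := by
    intro z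
    have h' := units_inv_apply_apply hu z
    rw [hhu] at h'
    exact h'
  have hsemi : ∀ x : ℝ, hfun fu (F x) = hfun fu x + ρ := by
    intro x
    have h' := hfun_semiconj fu hcu hminu x
    rw [hρfu, hfu] at h'
    exact h'
  have hcmpGhat : (∀ z, z + ρ ≤ Ghat z) ∨ (∀ z, Ghat z ≤ z + ρ) := by
    rcases hcmp with hle | hle
    · left
      intro z
      have h1 : z + ρ = hfun fu (F (hinv z)) := by rw [hsemi, hid]
      have h2 : hfun fu (F (hinv z)) ≤ hfun fu (G (hinv z)) :=
        hfun_mono fu (hle (hinv z))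
      rw [happly, h1]
      exact h2
    · right
      intro z
      have h1 : z + ρ = hfun fu (F (hinv z)) := by rw [hsemi, hid]
      have h2 : hfun fu (G (hinv z)) ≤ hfun fu (F (hinv z)) :=
        hfun_mono fu (hle (hinv z))
      rw [happly, h1]
      exact h2
  have hdense' : Dense {v : ℝ | ∃ k m : ℤ, v = (k : ℝ) * ρ + m} := by
    have h' := denseV fu hcu hminu
    rw [hρfu] at h'
    exact h'
  have hrigid := aux_rigid Ghat hGhatc ρ hτGhat hcmpGhat hdense'
  intro y
  have h1 : Ghat (hfun fu y) = hfun fu y + ρ := hrigid _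
  have h2 : Ghat (hfun fu y) = hfun fu (G y) := by rw [happly, hid2]
  have h3 : hfun fu (G y) = hfun fu (F y) := by rw [← h2, h1, ← hsemi]
  exact (hfun_strictMono fu hcu hminu).injective h3

end TNAux


/-- Extension of the perturbation lemma for rotation numbers to families of circle
endomorphisms: if `(H_t)_{t∈[0,1]}` is a continuous family of degree-one monotone lifts,
monotone in `t` (nonincreasing for every `x`, or nondecreasing for every `x`), if `H₀` is
strictly increasing and surjective with minimal induced circle homeomorphism, if
`|τ(H₁) − τ(H₀)| < 1` and `H₁(y₀) ≠ H₀(y₀)` for some `y₀`, then `τ(H₁) ≠ τ(H₀)`. -/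
theorem transNum_strictly_moves_endomorphisms (H : ℝ → ℝ → ℝ)
    (hcont : ContinuousOn (fun p : ℝ × ℝ => H p.1 p.2) (Icc 0 1 ×ˢ univ))
    (hlift : ∀ t ∈ Icc (0:ℝ) 1, IsDeg1MonotoneLift (H t))
    (hmono : (∀ x : ℝ, MonotoneOn (fun t => H t x) (Icc 0 1)) ∨
             (∀ x : ℝ, AntitoneOn (fun t => H t x) (Icc 0 1)))
    (h0strict : StrictMono (H 0)) (h0surj : Function.Surjective (H 0))
    (h0min : IsMinimalLift (H 0))
    (τ0 τ1 : ℝ) (hτ0 : HasTransNum (H 0) τ0) (hτ1 : HasTransNum (H 1) τ1)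
    (hlt : |τ1 - τ0| < 1)
    (hmove : ∃ y₀ : ℝ, H 1 y₀ ≠ H 0 y₀) :
    τ1 ≠ τ0 := by
  intro heq
  have h0 : IsDeg1MonotoneLift (H 0) := hlift 0 ⟨le_refl 0, zero_le_one⟩
  have h1 : IsDeg1MonotoneLift (H 1) := hlift 1 ⟨zero_le_one, le_refl 1⟩
  have hτ1' : HasTransNum (H 1) τ0 := heq ▸ hτ1
  have hcmp : (∀ x, H 0 x ≤ H 1 x) ∨ (∀ x, H 1 x ≤ H 0 x) := by
    rcases hmono with hm | hm
    · exact Or.inl fun x => hm x ⟨le_refl 0, zero_le_one⟩ ⟨zero_le_one, le_refl 1⟩ zero_le_one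
    · exact Or.inr fun x => hm x ⟨le_refl 0, zero_le_one⟩ ⟨zero_le_one, le_refl 1⟩ zero_le_one
  obtain ⟨y₀, hy₀⟩ := hmove
  exact hy₀ (TNAux.key (H 0) (H 1) h0 h1 h0strict h0surj h0min τ0 hτ0 hτ1' hcmp y₀)
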